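/- arXiv:2112.10579 — 2 statements merged into one kernel-verified Lean document; each statement's English description precedes it below -/
import Mathlib

section
/- If f : (0,∞) → ℝ satisfies f(a+b) = f(a) + f(b) for all a,b > 0 and f is Lebesgue measurable on some compact interval [c,d] ⊂ (0,∞) with c < d, then f(r) = f(1)·r for all r > 0. -/
open MeasureTheory Pointwise

theorem stmt1 (f : ℝ → ℝ)
    (hadd : ∀ a b : ℝ, 0 < a → 0 < b → f (a + b) = f a + f b)
    (hreg : ∃ c d : ℝ, 0 < c ∧ c < d ∧
      AEMeasurable f (MeasureTheory.volume.restrict (Set.Icc c d))) :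
    ∀ r : ℝ, 0 < r → f r = f 1 * r := by
  obtain ⟨c, d, hc, hcd, hmeas⟩ := hreg
  -- Step 1: f (n * x) = n * f x for positive naturals
  have hnat : ∀ n : ℕ, 0 < n → ∀ x : ℝ, 0 < x → f (n * x) = n * f x := by
    intro n hn
    induction n with
    | zero => omega
    | succ m ih =>
      intro x hx
      rcases Nat.eq_zero_or_pos m with hm | hm
      · subst hm; simp
      · have := hadd (m * x) x (by positivity) hx
        push_cast
        rw [add_mul, one_mul, this, ih hm x hx]
        push_cast
        ring
  -- Step 2: f q = q * f 1 for positive rationals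
  have hrat : ∀ q : ℚ, 0 < q → f (q : ℝ) = (q : ℝ) * f 1 := by
    intro q hq
    have hden : (0 : ℝ) < (q.den : ℝ) := by positivity
    have hqpos : (0 : ℝ) < (q : ℝ) := by exact_mod_cast hq
    have hnum : 0 < q.num := Rat.num_pos.mpr hq
    have h1 : f ((q.den : ℝ) * (q : ℝ)) = (q.den : ℝ) * f (q : ℝ) :=
      hnat q.den q.pos (q : ℝ) hqpos
    have h2 : ((q.den : ℝ)) * (q : ℝ) = (q.num : ℝ) := by
      rw [mul_comm]
      exact_mod_cast Rat.mul_den_eq_num q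
    have h3 : f ((q.num : ℝ)) = (q.num : ℝ) * f 1 := by
      have h4 : ((q.num.toNat : ℕ) : ℝ) = (q.num : ℝ) := by
        exact_mod_cast Int.toNat_of_nonneg hnum.le
      have h5 := hnat q.num.toNat (by omega) 1 one_pos
      rw [mul_one, h4] at h5
      exact h5
    rw [h2, h3] at h1
    have : f (q : ℝ) = (q.num : ℝ) / (q.den : ℝ) * f 1 := by
      field_simp at h1 ⊢
      linarith [h1]
    rw [this, Rat.cast_def]
  -- Step 3: find a measurable set A of positive measure, A ⊆ Icc c d, with |f| ≤ M on A
  obtain ⟨g, hgmeas, hfg⟩ := hmeas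
  set T : Set ℝ := MeasureTheory.toMeasurable (volume.restrict (Set.Icc c d)) {x | f x ≠ g x}
    with hT
  have hTmeas : MeasurableSet T := measurableSet_toMeasurable _ _
  have hTsub : {x | f x ≠ g x} ⊆ T := subset_toMeasurable _ _
  have hTzero : volume (T ∩ Set.Icc c d) = 0 := by
    have : (volume.restrict (Set.Icc c d)) T = 0 := by
      rw [measure_toMeasurable]
      exact hfg
    rwa [Measure.restrict_apply hTmeas] at this
  have hIccvol : volume (Set.Icc c d) = ENNReal.ofReal (d - c) := by
    simp [Real.volume_Icc]
  have hbase : 0 < volume (Set.Icc c d \ T) := by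
    have h1 : volume (Set.Icc c d) ≤ volume (Set.Icc c d \ T) + volume (T ∩ Set.Icc c d) := by
      refine (measure_mono ?_).trans (measure_union_le _ _)
      intro x hx
      by_cases hxT : x ∈ T
      · exact Or.inr ⟨hxT, hx⟩
      · exact Or.inl ⟨hx, hxT⟩
    rw [hTzero, add_zero, hIccvol] at h1
    calc (0:ENNReal) < ENNReal.ofReal (d - c) := by
          rw [ENNReal.ofReal_pos]; linarith
      _ ≤ _ := h1
  -- the sets where |g| ≤ n exhaust Icc c d \ T
  have hexhaust : (⋃ n : ℕ, (Set.Icc c d \ T) ∩ {x | |g x| ≤ (n:ℝ)}) = Set.Icc c d \ T := by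
    apply Set.Subset.antisymm
    · exact Set.iUnion_subset fun n => Set.inter_subset_left
    · intro x hx
      obtain ⟨n, hn⟩ := exists_nat_ge (|g x|)
      exact Set.mem_iUnion.mpr ⟨n, hx, hn⟩
  have hAmeas : ∀ n : ℕ, MeasurableSet ((Set.Icc c d \ T) ∩ {x | |g x| ≤ (n:ℝ)}) := by
    intro n
    exact (measurableSet_Icc.diff hTmeas).inter
      (measurableSet_le hgmeas.abs measurable_const)
  obtain ⟨n, hA⟩ : ∃ n : ℕ, 0 < volume ((Set.Icc c d \ T) ∩ {x | |g x| ≤ (n:ℝ)}) := by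
    by_contra h
    push_neg at h
    simp only [nonpos_iff_eq_zero] at h
    have : volume (⋃ n : ℕ, (Set.Icc c d \ T) ∩ {x | |g x| ≤ (n:ℝ)}) = 0 :=
      measure_iUnion_null h
    rw [hexhaust] at this
    exact absurd this hbase.ne'
  set A : Set ℝ := (Set.Icc c d \ T) ∩ {x | |g x| ≤ (n:ℝ)} with hAdef
  have hfA : ∀ x ∈ A, |f x| ≤ (n : ℝ) := by
    intro x hx
    have hxfg : f x = g x := by
      by_contra hne
      exact hx.1.2 (hTsub hne)
    rw [hxfg]
    exact hx.2
  have hApos : ∀ x ∈ A, 0 < x := fun x hx => lt_of_lt_of_le hc hx.1.1.1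
  -- Step 4: Steinhaus ⇒ f bounded on (0, δ)
  have hnhds : A - A ∈ nhds (0 : ℝ) :=
    MeasureTheory.Measure.sub_mem_nhds_zero_of_addHaar_pos volume A (hAmeas n) hA
  obtain ⟨δ, hδ, hball⟩ := Metric.mem_nhds_iff.mp hnhds
  have hbound : ∀ x : ℝ, 0 < x → x < δ → |f x| ≤ 2 * n := by
    intro x hx hxδ
    have hxball : x ∈ Metric.ball (0:ℝ) δ := by
      simp [Real.norm_eq_abs, abs_of_pos hx, hxδ]
    obtain ⟨a, ha, b, hb, hab⟩ := hball hxball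
    have hab' : a - b = x := hab
    have hax : a = b + x := by linarith
    have hbpos : 0 < b := hApos b hb
    have : f a = f b + f x := by rw [hax]; exact hadd b x hbpos hx
    have hfx : f x = f a - f b := by linarith
    have h1 := hfA a ha
    have h2 := hfA b hb
    rw [hfx]
    calc |f a - f b| ≤ |f a| + |f b| := abs_sub _ _
      _ ≤ (n:ℝ) + n := add_le_add h1 h2
      _ = 2 * n := by ring
  -- Step 5: g0 := f x - f 1 * x is additive, vanishes on positive rationals,
  -- bounded on (0, δ), hence bounded on (0, ∞), hence zero.
  set C : ℝ := 2 * n + |f 1| * δ with hC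
  have hg0bound : ∀ x : ℝ, 0 < x → |f x - f 1 * x| ≤ C := by
    have hsmall : ∀ x : ℝ, 0 < x → x < δ → |f x - f 1 * x| ≤ C := by
      intro x hx hxδ
      calc |f x - f 1 * x| ≤ |f x| + |f 1 * x| := abs_sub _ _
        _ ≤ 2 * n + |f 1| * δ := by
            refine add_le_add (hbound x hx hxδ) ?_
            rw [abs_mul, abs_of_pos hx]
            exact mul_le_mul_of_nonneg_left hxδ.le (abs_nonneg _)
    intro x hx
    rcases lt_or_ge x δ with h | h
    · exact hsmall x hx h
    · -- pick rational q with x - δ < q < x and q > 0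
      obtain ⟨q, hq1, hq2⟩ := exists_rat_btwn (show max (x - δ) 0 < x by
        rcases max_cases (x - δ) 0 with ⟨he, _⟩ | ⟨he, _⟩ <;> rw [he] <;> [linarith; exact hx])
      have hqpos : (0:ℚ) < q := by
        have : (0:ℝ) < (q:ℝ) := lt_of_le_of_lt (le_max_right _ _) hq1
        exact_mod_cast this
      have hqx : (q:ℝ) < x := hq2
      have hdiff1 : 0 < x - q := by linarith
      have hdiff2 : x - q < δ := by
        have : x - δ < q := lt_of_le_of_lt (le_max_left _ _) hq1
        linarith
      have hsplit : f x = f (q:ℝ) + f (x - q) := by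
        have := hadd (q:ℝ) (x - q) (by exact_mod_cast hqpos) hdiff1
        rw [show (q:ℝ) + (x - q) = x by ring] at this
        exact this
      have hq0 : f (q:ℝ) = (q:ℝ) * f 1 := hrat q hqpos
      have : f x - f 1 * x = f (x - q) - f 1 * (x - q) := by
        rw [hsplit, hq0]; ring
      rw [this]
      exact hsmall _ hdiff1 hdiff2
  intro r hr
  have hkey : ∀ k : ℕ, 0 < k → |f r - f 1 * r| ≤ C / k := by
    intro k hk
    have h1 : f (k * r) = k * f r := hnat k hk r hr
    have h2 : |f (k * r) - f 1 * (k * r)| ≤ C := hg0bound _ (by positivity)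
    rw [h1] at h2
    have h3 : (k:ℝ) * f r - f 1 * ((k:ℝ) * r) = k * (f r - f 1 * r) := by ring
    rw [h3, abs_mul, abs_of_pos (show (0:ℝ) < k by exact_mod_cast hk)] at h2
    rw [le_div_iff₀ (show (0:ℝ) < k by exact_mod_cast hk)]
    linarith [h2]
  have hzero : |f r - f 1 * r| = 0 := by
    by_contra h
    have hpos : 0 < |f r - f 1 * r| := lt_of_le_of_ne (abs_nonneg _) (Ne.symm h)
    obtain ⟨k, hk⟩ := exists_nat_gt (C / |f r - f 1 * r|)
    have hk0 : 0 < k := by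
      by_contra hk0
      push_neg at hk0
      interval_cases k
      have hCnn : 0 ≤ C := le_trans (abs_nonneg _) (hg0bound r hr)
      simp at hk
      nlinarith [div_nonneg hCnn hpos.le]
    have := hkey k hk0
    have hklt : C / (k:ℝ) < |f r - f 1 * r| := by
      rw [div_lt_iff₀ (show (0:ℝ) < k by exact_mod_cast hk0)]
      rw [div_lt_iff₀ hpos] at hk
      linarith [hk]
    linarith
  have := abs_eq_zero.mp hzero
  linarith
end

section
/- Let n ≥ 2 and let Z be an SL(n) covariant map from polytopes containing the origin in ℝⁿ to functions on ℝⁿ \ {0}. If P is a polytope containing the origin whose linear hull is span{e₁,…,e_d} with 0 ≤ d ≤ n−2, then for every x = r₁e₁ + ⋯ + r_ne_n ≠ 0 with r₁e₁ + ⋯ + r_de_d = 0, one has ZP(x) = ZP(e_n). -/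
open Matrix

/-- A polytope: the convex hull of a nonempty finite set of points. -/
def IsPolytope {n : ℕ} (P : Set (Fin n → ℝ)) : Prop :=
  ∃ S : Finset (Fin n → ℝ), S.Nonempty ∧ P = convexHull ℝ (S : Set _)

lemma transvection_transpose' {n : ℕ} (i j : Fin n) (c : ℝ) :
    (Matrix.transvection i j c)ᵀ = Matrix.transvection j i c := by
  unfold Matrix.transvection
  rw [Matrix.transpose_add, Matrix.transpose_one]
  congr 1
  ext a b
  simp [Matrix.single, and_comm]

lemma transvection_mulVec' {n : ℕ} (i j : Fin n) (c : ℝ) (v : Fin n → ℝ) :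
    Matrix.transvection i j c *ᵥ v = v + (c * v j) • (Pi.single i 1 : Fin n → ℝ) := by
  funext p
  rw [Matrix.transvection, Matrix.add_mulVec, Matrix.one_mulVec]
  simp only [Pi.add_apply, Pi.smul_apply, Pi.single_apply, smul_eq_mul]
  congr 1
  by_cases h : p = i
  · subst h
    simp [Matrix.mulVec, dotProduct, Matrix.single, ite_and,
      Finset.sum_ite_eq, mul_comm]
  · simp [h, Ne.symm h, Matrix.mulVec, dotProduct, Matrix.single, ite_and]

theorem stmt17 {n : ℕ} (hn : 2 ≤ n)
    (Z : Set (Fin n → ℝ) → (Fin n → ℝ) → ℝ)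
    (hcov : ∀ φ : Matrix (Fin n) (Fin n) ℝ, φ.det = 1 →
      ∀ P : Set (Fin n → ℝ), IsPolytope P → (0 : Fin n → ℝ) ∈ P →
      ∀ x : Fin n → ℝ, x ≠ 0 → Z ((fun y => φ *ᵥ y) '' P) x = Z P (φᵀ *ᵥ x))
    (P : Set (Fin n → ℝ)) (hP : IsPolytope P) (h0 : (0 : Fin n → ℝ) ∈ P)
    (d : ℕ) (hd : d ≤ n - 2)
    (hspan : Submodule.span ℝ P =
      Submodule.span ℝ {v : Fin n → ℝ | ∃ i : Fin n, (i : ℕ) < d ∧ v = Pi.single i 1})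
    (x : Fin n → ℝ) (hx : x ≠ 0) (hx' : ∀ i : Fin n, (i : ℕ) < d → x i = 0) :
    Z P x = Z P (Pi.single (Fin.mk (n - 1) (by omega)) 1) := by
  set m : Fin n := Fin.mk (n - 1) (by omega) with hm
  -- Every element of P vanishes at coordinates ≥ d.
  have hsp : ∀ w ∈ Submodule.span ℝ {v : Fin n → ℝ | ∃ i : Fin n, (i : ℕ) < d ∧ v = Pi.single i 1},
      ∀ l : Fin n, d ≤ (l : ℕ) → w l = 0 := by
    intro w hw
    induction hw using Submodule.span_induction with
    | mem w hw =>
      intro l hl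
      obtain ⟨i, hi, rfl⟩ := hw
      have hli : l ≠ i := by
        intro h; subst h; omega
      exact Pi.single_eq_of_ne hli 1
    | zero => intro l _; rfl
    | add a b _ _ ha hb => intro l hl; simp [ha l hl, hb l hl]
    | smul c a _ ha => intro l hl; simp [ha l hl]
  have hPsupp : ∀ p ∈ P, ∀ l : Fin n, d ≤ (l : ℕ) → p l = 0 := by
    intro p hp
    exact hsp p (hspan ▸ Submodule.subset_span hp)
  -- Key step: applying a transvection with target index ≥ d doesn't change Z P.
  have key : ∀ (i j : Fin n), d ≤ (i : ℕ) → i ≠ j → ∀ (c : ℝ) (v : Fin n → ℝ), v ≠ 0 →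
      Z P v = Z P (v + (c * v j) • (Pi.single i 1 : Fin n → ℝ)) := by
    intro i j hi hij c v hv
    have hdet : (Matrix.transvection j i c).det = 1 :=
      Matrix.det_transvection_of_ne j i (Ne.symm hij) c
    have hfix : ∀ p ∈ P, Matrix.transvection j i c *ᵥ p = p := by
      intro p hp
      rw [transvection_mulVec', hPsupp p hp i hi]
      simp
    have himg : (fun y => Matrix.transvection j i c *ᵥ y) '' P = P := by
      apply Set.Subset.antisymm
      · rintro _ ⟨p, hp, rfl⟩
        dsimp only
        rw [hfix p hp]; exact hp
      · intro p hp
        exact ⟨p, hp, hfix p hp⟩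
    have := hcov (Matrix.transvection j i c) hdet P hP h0 v hv
    rw [himg, transvection_transpose', transvection_mulVec'] at this
    exact this
  -- Clearing lemma: from any vector with m-th coordinate 1, reach Pi.single m 1.
  have hdm : d < n - 1 := by omega
  have B : ∀ S : Finset (Fin n), ∀ v : Fin n → ℝ, v m = 1 → (∀ j : Fin n, (j : ℕ) < d → v j = 0) →
      (∀ i : Fin n, i ≠ m → v i ≠ 0 → i ∈ S) → Z P v = Z P (Pi.single m 1) := by
    intro S
    induction S using Finset.induction_on with
    | empty =>
      intro v h1 h2 h3
      congr 1
      funext p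
      by_cases hp : p = m
      · subst hp; simp [h1]
      · have : v p = 0 := by
          by_contra hvp
          exact absurd (h3 p hp hvp) (by simp)
        rw [this, Pi.single_eq_of_ne hp]
    | @insert a S ha ih =>
      intro v h1 h2 h3
      by_cases hva : v a ≠ 0 ∧ a ≠ m
      · obtain ⟨hva1, hva2⟩ := hva
        have had : d ≤ (a : ℕ) := by
          by_contra h
          exact hva1 (h2 a (by omega))
        have hvne : v ≠ 0 := by
          intro h; rw [h] at h1; simp at h1
        rw [key a m had hva2 (-(v a)) v hvne]
        set v' := v + (-(v a) * v m) • (Pi.single a 1 : Fin n → ℝ) with hv'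
        have hv'm : v' m = 1 := by
          simp [hv', Pi.single_eq_of_ne (Ne.symm hva2), h1]
        have hv'lt : ∀ j : Fin n, (j : ℕ) < d → v' j = 0 := by
          intro j hj
          have : j ≠ a := by intro h; subst h; omega
          simp [hv', Pi.single_eq_of_ne this, h2 j hj]
        apply ih v' hv'm hv'lt
        intro i him hvi
        by_cases hia : i = a
        · exfalso
          apply hvi
          subst hia
          simp [hv', h1]
        · have : v' i = v i := by simp [hv', Pi.single_eq_of_ne hia]
          rw [this] at hvi
          have := h3 i him hvi
          rcases Finset.mem_insert.mp this with h | h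
          · exact absurd h hia
          · exact h
      · apply ih v h1 h2
        intro i him hvi
        have := h3 i him hvi
        rcases Finset.mem_insert.mp this with h | h
        · exfalso
          subst h
          exact hva ⟨hvi, him⟩
        · exact h
  -- Find a nonzero coordinate of x.
  obtain ⟨k, hk0⟩ := Function.ne_iff.mp hx
  have hk : x k ≠ 0 := by simpa using hk0
  have hkd : d ≤ (k : ℕ) := by
    by_contra h
    exact hk (hx' k (by omega))
  set d' : Fin n := Fin.mk d (by omega) with hd'
  have hmd' : m ≠ d' := by
    intro h
    have := congrArg (Fin.val) h
    simp [hm, hd'] at this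
    omega
  have hdm' : d ≤ (m : ℕ) := by simp [hm]; omega
  by_cases hkm : k = m
  · -- x m ≠ 0 : first make coordinate d' equal to 1, then coordinate m equal to 1.
    have hxm : x m ≠ 0 := hkm ▸ hk
    have step1 := key d' m (by simp [hd']) (Ne.symm hmd') ((1 - x d') / x m) x hx
    rw [step1]
    set v1 := x + ((1 - x d') / x m * x m) • (Pi.single d' 1 : Fin n → ℝ) with hv1
    have hv1d : v1 d' = 1 := by
      simp only [hv1, Pi.add_apply, Pi.smul_apply, Pi.single_eq_same, smul_eq_mul, mul_one]
      rw [div_mul_cancel₀ _ hxm]; ring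
    have hv1ne : v1 ≠ 0 := by
      intro h; rw [h] at hv1d; simp at hv1d
    rw [key m d' hdm' hmd' (1 - v1 m) v1 hv1ne]
    set v2 := v1 + ((1 - v1 m) * v1 d') • (Pi.single m 1 : Fin n → ℝ) with hv2
    apply B Finset.univ
    · have h2m : v2 m = v1 m + (1 - v1 m) * v1 d' := by simp [hv2]
      rw [h2m, hv1d]; ring
    · intro j hj
      have hja : j ≠ d' := by intro h; subst h; simp [hd'] at hj
      have hjm : j ≠ m := by intro h; subst h; simp [hm] at hj; omega
      simp [hv2, hv1, Pi.single_eq_of_ne hja, Pi.single_eq_of_ne hjm, hx' j hj]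
    · intro i _ _; exact Finset.mem_univ i
  · -- x k ≠ 0 with k ≠ m : make coordinate m equal to 1 directly.
    rw [key m k hdm' (fun h => hkm (h.symm)) ((1 - x m) / x k) x hx]
    set v1 := x + ((1 - x m) / x k * x k) • (Pi.single m 1 : Fin n → ℝ) with hv1
    apply B Finset.univ
    · simp only [hv1, Pi.add_apply, Pi.smul_apply, Pi.single_eq_same, smul_eq_mul, mul_one]
      rw [div_mul_cancel₀ _ hk]; ring
    · intro j hj
      have hjm : j ≠ m := by intro h; subst h; simp [hm] at hj; omega
      simp [hv1, Pi.single_eq_of_ne hjm, hx' j hj]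
    · intro i _ _; exact Finset.mem_univ i
end
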